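/- Conservation of generalized entropies: under the standing assumptions, suppose n solves the GHD equation via the fixed-point construction, so that n(t,x,p) = n₀(X₀(X̂(t,x,p)−v(p)t,p),p) and ∂̌X̂(t,x,p)/∂̌x = 1^dr(t,x,p). Let f : ℝ → ℝ be such that S_p[f](0) = (1/2π)∫ f(n(0,x,p)) 1^dr(0,x,p) dx exists (absolutely convergent) for a fixed p. Then for every t, S_p[f](t) = (1/2π)∫ f(n(t,x,p)) 1^dr(t,x,p) dx exists and equals S_p[f](0). -/

import Mathlib

open MeasureTheory Set Filter
open scoped Topology ENNReal

-- a.e. nonnegativity from nonnegative interval integrals, via Lebesgue differentiation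
lemma aux_ae_nonneg (D : ℝ → ℝ) (hD : Measurable D) (C : ℝ) (hC : ∀ x, |D x| ≤ C)
    (hpos : ∀ x y, x ≤ y → 0 ≤ ∫ z in x..y, D z) : ∀ᵐ x, 0 ≤ D x := by
  have hloc : LocallyIntegrable D (volume : Measure ℝ) := by
    intro x
    refine ⟨Icc (x - 1) (x + 1), Icc_mem_nhds (by linarith) (by linarith), ?_⟩
    refine Integrable.mono' (integrableOn_const ?_) (hD.aestronglyMeasurable.restrict)
      (Filter.Eventually.of_forall fun y => by simpa using hC y)
    simp [Real.volume_Icc]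
  filter_upwards [(IsUnifLocDoublingMeasure.vitaliFamily (volume : Measure ℝ) 1).ae_tendsto_average
    hloc] with x hx
  have h2 := hx.comp (Real.tendsto_Icc_vitaliFamily_right x)
  refine ge_of_tendsto h2 ?_
  filter_upwards [self_mem_nhdsWithin] with y (hy : x < y)
  simp only [Function.comp_apply, setAverage_eq, smul_eq_mul]
  have h3 : (0:ℝ) ≤ ∫ z in Icc x y, D z := by
    rw [MeasureTheory.integral_Icc_eq_integral_Ioc, ← intervalIntegral.integral_of_le hy.le]
    exact hpos x y hy.le
  positivity

lemma aux_cov (F D : ℝ → ℝ) (hFm : StrictMono F) (hFs : Function.Surjective F)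
    (hD : Measurable D) (C : ℝ) (hC : ∀ x, |D x| ≤ C)
    (hFD : ∀ x x', F x - F x' = ∫ y in x'..x, D y) (h : ℝ → ℝ) :
    ((Integrable fun x => h (F x) * D x) ↔ Integrable h) ∧
      (∫ x, h (F x) * D x) = ∫ y, h y := by
  have hDnn : ∀ᵐ x, 0 ≤ D x := by
    refine aux_ae_nonneg D hD C hC fun x y hxy => ?_
    rw [← hFD y x]
    have := hFm.monotone hxy
    linarith
  set e : ℝ ≃o ℝ := StrictMono.orderIsoOfSurjective F hFm hFs with he
  have heF : ∀ x, e x = F x := fun x => rfl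
  have emb : MeasurableEmbedding F := e.toHomeomorph.measurableEmbedding
  set μ : Measure ℝ := volume.withDensity (fun x => ENNReal.ofReal (D x)) with hμ
  have hIocInt : ∀ c d : ℝ, IntegrableOn D (Ioc c d) := by
    intro c d
    refine Integrable.mono' (integrableOn_const ?_) hD.aestronglyMeasurable.restrict
      (Filter.Eventually.of_forall fun y => by simpa using hC y)
    simp [Real.volume_Ioc]
  have hIoc : ∀ c d : ℝ, c ≤ d → μ (Ioc c d) = ENNReal.ofReal (F d - F c) := by
    intro c d hcd
    rw [hμ, withDensity_apply _ measurableSet_Ioc]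
    rw [← ofReal_integral_eq_lintegral_ofReal (hIocInt c d) (ae_restrict_of_ae hDnn)]
    congr 1
    rw [← intervalIntegral.integral_of_le hcd, ← hFD d c]
  have hval : ∀ a b : ℝ, a < b → (Measure.map F μ) (Ioc a b) = ENNReal.ofReal (b - a) := by
    intro a b hab
    rw [Measure.map_apply emb.measurable measurableSet_Ioc]
    have hpre : F ⁻¹' Ioc a b = Ioc (e.symm a) (e.symm b) := by
      ext z
      simp only [mem_preimage, mem_Ioc, ← heF z]
      constructor
      · rintro ⟨h1, h2⟩
        refine ⟨?_, ?_⟩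
        · have h1' : e.symm a < e.symm (e z) := e.symm.strictMono h1
          rwa [e.symm_apply_apply] at h1'
        · have h2' : e.symm (e z) ≤ e.symm b := e.symm.monotone h2
          rwa [e.symm_apply_apply] at h2'
      · rintro ⟨h1, h2⟩
        refine ⟨?_, ?_⟩
        · have h1' : e (e.symm a) < e z := e.strictMono h1
          rwa [e.apply_symm_apply] at h1'
        · have h2' : e z ≤ e (e.symm b) := e.monotone h2
          rwa [e.apply_symm_apply] at h2'
    rw [hpre, hIoc _ _ (e.symm.monotone hab.le)]
    have h1 : F (e.symm b) = b := e.apply_symm_apply b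
    have h2 : F (e.symm a) = a := e.apply_symm_apply a
    rw [h1, h2]
  have hmap : Measure.map F μ = volume := by
    refine Measure.ext_of_Ioc' _ _ (fun a b hab => ?_) (fun a b hab => ?_)
    · rw [hval a b hab]; exact ENNReal.ofReal_ne_top
    · rw [hval a b hab, Real.volume_Ioc]
  have hDm : AEMeasurable (fun x => (D x).toNNReal) (volume : Measure ℝ) :=
    (measurable_real_toNNReal.comp hD).aemeasurable
  have hμeq : μ = volume.withDensity (fun x => ((D x).toNNReal : ℝ≥0∞)) := by
    rw [hμ]; rfl
  have haeeq : (fun x => ((D x).toNNReal : ℝ) • h (F x)) =ᵐ[volume]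
      (fun x => h (F x) * D x) := by
    filter_upwards [hDnn] with x hx
    rw [Real.coe_toNNReal _ hx, smul_eq_mul, mul_comm]
  constructor
  · calc (Integrable fun x => h (F x) * D x)
        ↔ Integrable (fun x => ((D x).toNNReal : ℝ) • h (F x)) volume :=
          integrable_congr haeeq.symm
      _ ↔ Integrable (fun x => h (F x)) μ := by
          rw [hμeq]; exact (integrable_withDensity_iff_integrable_smul₀ hDm).symm
      _ ↔ Integrable h (Measure.map F μ) := (emb.integrable_map_iff).symm
      _ ↔ Integrable h volume := by rw [hmap]
  · calc (∫ x, h (F x) * D x)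
        = ∫ x, ((D x).toNNReal : ℝ) • h (F x) := (integral_congr_ae haeeq).symm
      _ = ∫ x, (D x).toNNReal • h (F x) := by simp_rw [NNReal.smul_def]
      _ = ∫ x, h (F x) ∂μ := by
          rw [hμeq]; exact (integral_withDensity_eq_integral_smul₀ hDm _).symm
      _ = ∫ y, h y ∂(Measure.map F μ) := (emb.integral_map _).symm
      _ = ∫ y, h y := by rw [hmap]


/-- Conservation of generalized entropies. With
`n(t,x,p) = n₀(X₀(X̂(t,x,p) - v(p)t, p), p)` the occupation function obtained from the
fixed-point construction, `1^dr(t,x,·)` the associated dressing of the constant `1`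
(with `∂̌X̂/∂̌x = 1^dr` in integrated form), and `X̂(t,·,p)` a homeomorphism of ℝ:
if `S_p[f](0) = (1/2π)∫ f(n(0,x,p)) 1^dr(0,x,p) dx` exists for some `f : ℝ → ℝ` and a
fixed `p`, then for every `t` the integral `S_p[f](t)` exists and equals `S_p[f](0)`. -/
theorem stmt_18
    (T : ℝ → ℝ → ℝ) (n₀ : ℝ → ℝ → ℝ) (v : ℝ → ℝ) (X0 : ℝ → ℝ → ℝ)
    (Xhat onedr : ℝ → ℝ → ℝ → ℝ) (κ₀ Cv : ℝ) (f : ℝ → ℝ) (p : ℝ)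
    (hT_meas : Measurable (Function.uncurry T))
    (hT_int : ∀ p', Integrable (fun q => T p' q))
    (hT_op : ∃ M, ∀ p', (∫ q, |T p' q|) ≤ M)
    (hn_meas : Measurable (Function.uncurry n₀))
    (hn_nonneg : ∀ x p', 0 ≤ n₀ x p')
    (hn_bdd : ∃ C, ∀ x p', n₀ x p' ≤ C)
    (hsup_meas : Measurable (fun q => ⨆ x, n₀ x q))
    (hκ₀ : ∀ p', (∫ q, |T p' q| * ⨆ x, n₀ x q) ≤ κ₀)
    (hA : (((∀ p' q, 0 ≤ T p' q) ∨ (∀ p' q, T p' q ≤ 0)) ∧ κ₀ < 1) ∨ κ₀ < 1 / 2)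
    (hv_meas : Measurable v)
    (hCv : ∀ x p', |v p'| * n₀ x p' ≤ Cv)
    (hX0_meas : Measurable (Function.uncurry X0))
    (hXhat_meas : ∀ t x, Measurable fun p' => Xhat t x p')
    (hXhat_bdd : ∀ t x, ∃ C, ∀ p', |Xhat t x p'| ≤ C)
    (h1_meas : ∀ t p', Measurable fun x => onedr t x p')
    (h1_bdd : ∃ C, ∀ t x p', |onedr t x p'| ≤ C)
    (h1_eq : ∀ t x p', onedr t x p'
      = 1 + ∫ q, T p' q * (n₀ (X0 (Xhat t x q - v q * t) q) q * onedr t x q))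
    -- ∂̌X̂/∂̌x = 1^dr, in integrated form:
    (hXder : ∀ t x x' p', Xhat t x p' - Xhat t x' p' = ∫ y in x'..x, onedr t y p')
    -- X̂(t,·,p) is a (strictly increasing) homeomorphism of ℝ:
    (hXbij : ∀ t p', Function.Bijective fun x => Xhat t x p')
    (hXmono : ∀ t p', StrictMono fun x => Xhat t x p')
    -- S_p[f](0) exists:
    (hint0 : Integrable fun x => f (n₀ (X0 (Xhat 0 x p - v p * 0) p) p) * onedr 0 x p) :
    ∀ t, (Integrable fun x => f (n₀ (X0 (Xhat t x p - v p * t) p) p) * onedr t x p) ∧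
      (1 / (2 * Real.pi)) * (∫ x, f (n₀ (X0 (Xhat t x p - v p * t) p) p) * onedr t x p)
        = (1 / (2 * Real.pi)) *
            ∫ x, f (n₀ (X0 (Xhat 0 x p - v p * 0) p) p) * onedr 0 x p := by
  obtain ⟨C, hC⟩ := h1_bdd
  set h : ℝ → ℝ := fun y => f (n₀ (X0 y p) p) with hh
  have key : ∀ t : ℝ,
      ((Integrable fun x => f (n₀ (X0 (Xhat t x p - v p * t) p) p) * onedr t x p) ↔
        Integrable h) ∧
      (∫ x, f (n₀ (X0 (Xhat t x p - v p * t) p) p) * onedr t x p) = ∫ y, h y := by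
    intro t
    set F : ℝ → ℝ := fun x => Xhat t x p - v p * t with hF
    set D : ℝ → ℝ := fun x => onedr t x p with hDdef
    have hFm : StrictMono F := fun a b hab => by
      have := hXmono t p hab
      simp only [hF]
      exact sub_lt_sub_right this _
    have hFs : Function.Surjective F := by
      intro y
      obtain ⟨x, hx⟩ := (hXbij t p).2 (y + v p * t)
      exact ⟨x, by simp only [hF]; simp only [] at hx; rw [hx]; ring⟩
    have hFD : ∀ x x', F x - F x' = ∫ y in x'..x, D y := by
      intro x x'
      have := hXder t x x' p
      simp only [hF, hDdef]
      calc Xhat t x p - v p * t - (Xhat t x' p - v p * t)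
          = Xhat t x p - Xhat t x' p := by ring
        _ = ∫ y in x'..x, onedr t y p := this
    have := aux_cov F D hFm hFs (h1_meas t p) C (fun x => hC t x p) hFD h
    exact this
  have hInth : Integrable h := ((key 0).1).mp hint0
  intro t
  refine ⟨((key t).1).mpr hInth, ?_⟩
  rw [(key t).2, (key 0).2]
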